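/- arXiv:1211.0089 — 2 statements merged into one kernel-verified Lean document; each statement's English description precedes it below -/
import Mathlib

section
/- The ratio [3 - cosh(2t)]·[sinh(2t) + t·cosh(2t) - 3t] / (16t·sinh²t) is strictly decreasing in t on (0, ∞). -/
open Real Set

private lemma hd_s3 (x : ℝ) : HasDerivAt (fun t : ℝ => Real.sinh (3*t)) (3 * Real.cosh (3*x)) x := by
  have h := (Real.hasDerivAt_sinh (3*x)).comp x ((hasDerivAt_id x).const_mul 3)
  refine h.congr_deriv ?_
  ring

private lemma hd_c3 (x : ℝ) : HasDerivAt (fun t : ℝ => Real.cosh (3*t)) (3 * Real.sinh (3*x)) x := by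
  have h := (Real.hasDerivAt_cosh (3*x)).comp x ((hasDerivAt_id x).const_mul 3)
  refine h.congr_deriv ?_
  ring

private lemma hd_s2 (x : ℝ) : HasDerivAt (fun t : ℝ => Real.sinh (2*t)) (2 * Real.cosh (2*x)) x := by
  have h := (Real.hasDerivAt_sinh (2*x)).comp x ((hasDerivAt_id x).const_mul 2)
  refine h.congr_deriv ?_
  ring

private lemma pos_of_deriv (F F' : ℝ → ℝ) (hF : ∀ x, HasDerivAt F (F' x) x)
    (h0 : F 0 = 0) (hpos : ∀ x, 0 < x → 0 < F' x) : ∀ x, 0 < x → 0 < F x := by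
  intro x hx
  have mono : StrictMonoOn F (Set.Ici 0) := by
    refine strictMonoOn_of_deriv_pos (convex_Ici 0)
      (fun y _ => (hF y).continuousAt.continuousWithinAt) ?_
    intro y hy
    rw [interior_Ici, mem_Ioi] at hy
    rw [(hF y).deriv]
    exact hpos y hy
  have := mono Set.self_mem_Ici (Set.mem_Ici.mpr hx.le) hx
  rwa [h0] at this

private lemma E6_pos : ∀ x : ℝ, 0 < x →
    0 < 729 * Real.cosh (3*x) - 217 * Real.cosh x - 92 * (x * Real.sinh x) - 8 * (x^2 * Real.cosh x) := by
  intro x hx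
  have hc1 : 1 ≤ Real.cosh x := Real.one_le_cosh x
  have hc0 : 0 < Real.cosh x := Real.cosh_pos x
  have hxs : x ≤ Real.sinh x := by
    rw [Real.self_le_sinh_iff]; exact hx.le
  have hs0 : 0 < Real.sinh x := by rwa [Real.sinh_pos_iff]
  have h3 : Real.cosh (3*x) = 4 * Real.cosh x ^ 3 - 3 * Real.cosh x := Real.cosh_three_mul x
  have hid : Real.cosh x ^ 2 - Real.sinh x ^ 2 = 1 := Real.cosh_sq_sub_sinh_sq x
  rw [h3]
  have hxs' : x * Real.sinh x ≤ Real.cosh x ^ 2 - 1 := by nlinarith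
  have hx2 : x^2 ≤ Real.cosh x ^ 2 - 1 := by nlinarith
  have hx2' : x^2 * Real.cosh x ≤ (Real.cosh x ^ 2 - 1) * Real.cosh x :=
    mul_le_mul_of_nonneg_right hx2 hc0.le
  have hcc : Real.cosh x ≤ Real.cosh x ^ 2 := by nlinarith
  have hcc2 : Real.cosh x ^ 2 ≤ Real.cosh x ^ 3 := by nlinarith
  nlinarith [hxs', hx2', hcc, hcc2, hc1]

private lemma D4_pos : ∀ x : ℝ, 0 < x →
    0 < Real.cosh (3*x) - Real.cosh x + 4 * (x * Real.sinh x) - 8 * (x^2 * Real.cosh x) := by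
  have hxc : ∀ x : ℝ, HasDerivAt (fun t : ℝ => t * Real.cosh t) (Real.cosh x + x * Real.sinh x) x := by
    intro x
    have h := (hasDerivAt_id x).mul (Real.hasDerivAt_cosh x)
    refine h.congr_deriv ?_
    simp [id_eq]
  have hxs : ∀ x : ℝ, HasDerivAt (fun t : ℝ => t * Real.sinh t) (Real.sinh x + x * Real.cosh x) x := by
    intro x
    have h := (hasDerivAt_id x).mul (Real.hasDerivAt_sinh x)
    refine h.congr_deriv ?_
    simp [id_eq]
  have hx2c : ∀ x : ℝ, HasDerivAt (fun t : ℝ => t^2 * Real.cosh t) (2*x*Real.cosh x + x^2 * Real.sinh x) x := by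
    intro x
    have h1 : HasDerivAt (fun t : ℝ => t^2) (2*x) x := by
      simpa using hasDerivAt_pow 2 x
    exact h1.mul (Real.hasDerivAt_cosh x)
  have hx2s : ∀ x : ℝ, HasDerivAt (fun t : ℝ => t^2 * Real.sinh t) (2*x*Real.sinh x + x^2 * Real.cosh x) x := by
    intro x
    have h1 : HasDerivAt (fun t : ℝ => t^2) (2*x) x := by
      simpa using hasDerivAt_pow 2 x
    exact h1.mul (Real.hasDerivAt_sinh x)
  have hE5 : ∀ x : ℝ, 0 < x →
      0 < 243 * Real.sinh (3*x) - 141 * Real.sinh x - 76 * (x * Real.cosh x) - 8 * (x^2 * Real.sinh x) := by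
    refine pos_of_deriv _ (fun x => 729 * Real.cosh (3*x) - 217 * Real.cosh x - 92 * (x * Real.sinh x) - 8 * (x^2 * Real.cosh x)) (fun x => ?_) (by simp) E6_pos
    have h := ((((hd_s3 x).const_mul 243).sub ((Real.hasDerivAt_sinh x).const_mul 141)).sub ((hxc x).const_mul 76)).sub ((hx2s x).const_mul 8)
    refine h.congr_deriv ?_
    ring
  have hE4 : ∀ x : ℝ, 0 < x →
      0 < 81 * Real.cosh (3*x) - 81 * Real.cosh x - 60 * (x * Real.sinh x) - 8 * (x^2 * Real.cosh x) := by
    refine pos_of_deriv _ (fun x => 243 * Real.sinh (3*x) - 141 * Real.sinh x - 76 * (x * Real.cosh x) - 8 * (x^2 * Real.sinh x)) (fun x => ?_) (by simp) hE5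
    have h := ((((hd_c3 x).const_mul 81).sub ((Real.hasDerivAt_cosh x).const_mul 81)).sub ((hxs x).const_mul 60)).sub ((hx2c x).const_mul 8)
    refine h.congr_deriv ?_
    ring
  have hE3 : ∀ x : ℝ, 0 < x →
      0 < 27 * Real.sinh (3*x) - 37 * Real.sinh x - 44 * (x * Real.cosh x) - 8 * (x^2 * Real.sinh x) := by
    refine pos_of_deriv _ (fun x => 81 * Real.cosh (3*x) - 81 * Real.cosh x - 60 * (x * Real.sinh x) - 8 * (x^2 * Real.cosh x)) (fun x => ?_) (by simp) hE4
    have h := ((((hd_s3 x).const_mul 27).sub ((Real.hasDerivAt_sinh x).const_mul 37)).sub ((hxc x).const_mul 44)).sub ((hx2s x).const_mul 8)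
    refine h.congr_deriv ?_
    ring
  have hE2 : ∀ x : ℝ, 0 < x →
      0 < 9 * Real.cosh (3*x) - 9 * Real.cosh x - 28 * (x * Real.sinh x) - 8 * (x^2 * Real.cosh x) := by
    refine pos_of_deriv _ (fun x => 27 * Real.sinh (3*x) - 37 * Real.sinh x - 44 * (x * Real.cosh x) - 8 * (x^2 * Real.sinh x)) (fun x => ?_) (by simp) hE3
    have h := ((((hd_c3 x).const_mul 9).sub ((Real.hasDerivAt_cosh x).const_mul 9)).sub ((hxs x).const_mul 28)).sub ((hx2c x).const_mul 8)
    refine h.congr_deriv ?_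
    ring
  have hE1 : ∀ x : ℝ, 0 < x →
      0 < 3 * Real.sinh (3*x) + 3 * Real.sinh x - 12 * (x * Real.cosh x) - 8 * (x^2 * Real.sinh x) := by
    refine pos_of_deriv _ (fun x => 9 * Real.cosh (3*x) - 9 * Real.cosh x - 28 * (x * Real.sinh x) - 8 * (x^2 * Real.cosh x)) (fun x => ?_) (by simp) hE2
    have h := ((((hd_s3 x).const_mul 3).add ((Real.hasDerivAt_sinh x).const_mul 3)).sub ((hxc x).const_mul 12)).sub ((hx2s x).const_mul 8)
    refine h.congr_deriv ?_
    ring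
  refine pos_of_deriv _ (fun x => 3 * Real.sinh (3*x) + 3 * Real.sinh x - 12 * (x * Real.cosh x) - 8 * (x^2 * Real.sinh x)) (fun x => ?_) (by simp) hE1
  have h := (((hd_c3 x).sub (Real.hasDerivAt_cosh x)).add ((hxs x).const_mul 4)).sub ((hx2c x).const_mul 8)
  refine h.congr_deriv ?_
  ring

private lemma D_pos (x : ℝ) (hx : 0 < x) :
    0 < x * Real.sinh x + Real.sinh x ^ 2 * Real.cosh x - 2 * x^2 * Real.cosh x := by
  have h := D4_pos x hx
  have h3 : Real.cosh (3*x) = 4 * Real.cosh x ^ 3 - 3 * Real.cosh x := Real.cosh_three_mul x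
  have hid : Real.cosh x ^ 2 - Real.sinh x ^ 2 = 1 := Real.cosh_sq_sub_sinh_sq x
  rw [h3] at h
  have hsc : Real.sinh x ^ 2 * Real.cosh x = Real.cosh x ^ 3 - Real.cosh x := by
    linear_combination (-(Real.cosh x)) * hid
  linarith [hsc, h]

private lemma sinh_lt_mul_cosh (x : ℝ) (hx : 0 < x) : Real.sinh x < x * Real.cosh x := by
  have h := pos_of_deriv (fun t => t * Real.cosh t - Real.sinh t) (fun x => x * Real.sinh x)
    (fun x => by
      have h := ((hasDerivAt_id x).mul (Real.hasDerivAt_cosh x)).sub (Real.hasDerivAt_sinh x)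
      refine h.congr_deriv ?_
      simp [id_eq])
    (by simp)
    (fun y hy => mul_pos hy (by rwa [Real.sinh_pos_iff]))
    x hx
  have h' : 0 < x * Real.cosh x - Real.sinh x := h
  linarith

private lemma A_anti : StrictAntiOn (fun t : ℝ => (Real.sinh (2*t) - 2*t) / (2*t*Real.sinh t^2)) (Set.Ioi 0) := by
  refine strictAntiOn_of_deriv_neg (convex_Ioi 0) ?_ ?_
  · apply ContinuousOn.div
    · fun_prop
    · fun_prop
    · intro x hx
      have hx : (0:ℝ) < x := hx
      have hs : 0 < Real.sinh x := by rwa [Real.sinh_pos_iff]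
      positivity
  · intro x hx
    rw [interior_Ioi, mem_Ioi] at hx
    have hs : 0 < Real.sinh x := by rwa [Real.sinh_pos_iff]
    have hden : 2*x*Real.sinh x^2 ≠ 0 := by positivity
    have hN : HasDerivAt (fun t : ℝ => Real.sinh (2*t) - 2*t) (2 * Real.cosh (2*x) - 2) x := by
      have h := (hd_s2 x).sub ((hasDerivAt_id x).const_mul 2)
      refine h.congr_deriv ?_
      ring
    have hD : HasDerivAt (fun t : ℝ => 2*t*Real.sinh t^2) (2*Real.sinh x^2 + 2*x*(2*Real.sinh x*Real.cosh x)) x := by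
      have h1 : HasDerivAt (fun t : ℝ => 2*t) 2 x := by
        have := (hasDerivAt_id x).const_mul (2:ℝ)
        refine this.congr_deriv ?_
        ring
      have h2 : HasDerivAt (fun t : ℝ => Real.sinh t^2) (2*Real.sinh x*Real.cosh x) x := by
        have h := (Real.hasDerivAt_sinh x).pow 2
        refine h.congr_deriv ?_
        norm_num
      exact h1.mul h2
    have hq := hN.div hD hden
    rw [show deriv (fun t : ℝ => (Real.sinh (2*t) - 2*t) / (2*t*Real.sinh t^2)) x = _ from hq.deriv]
    apply div_neg_of_neg_of_pos
    · have h2c : Real.cosh (2*x) = Real.cosh x^2 + Real.sinh x^2 := Real.cosh_two_mul x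
      have h2s : Real.sinh (2*x) = 2*Real.sinh x*Real.cosh x := Real.sinh_two_mul x
      have hD' := D_pos x hx
      have hid : Real.cosh x ^ 2 - Real.sinh x ^ 2 = 1 := Real.cosh_sq_sub_sinh_sq x
      rw [h2c, h2s]
      have hexp : (2*(Real.cosh x^2+Real.sinh x^2)-2)*(2*x*Real.sinh x^2)
          - (2*Real.sinh x*Real.cosh x-2*x)*(2*Real.sinh x^2+2*x*(2*Real.sinh x*Real.cosh x))
          = -4*Real.sinh x*(x*Real.sinh x + Real.sinh x^2*Real.cosh x - 2*x^2*Real.cosh x)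
            - 4*x*Real.sinh x^2*(Real.cosh x^2 - Real.sinh x^2 - 1) := by
        ring
      have hz : Real.cosh x^2 - Real.sinh x^2 - 1 = 0 := by linarith
      rw [hexp, hz]
      have := mul_pos hs hD'
      nlinarith
    · positivity

private lemma B_mono : StrictMonoOn (fun t : ℝ => Real.sinh (2*t) / t) (Set.Ioi 0) := by
  refine strictMonoOn_of_deriv_pos (convex_Ioi 0) ?_ ?_
  · apply ContinuousOn.div
    · fun_prop
    · fun_prop
    · intro x hx
      exact ne_of_gt hx
  · intro x hx
    rw [interior_Ioi, mem_Ioi] at hx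
    have hq := (hd_s2 x).div (hasDerivAt_id' x) (ne_of_gt hx)
    rw [show deriv (fun t : ℝ => Real.sinh (2*t) / t) x = _ from hq.deriv]
    apply div_pos
    · have h := sinh_lt_mul_cosh (2*x) (by linarith)
      nlinarith
    · positivity

theorem stmt17 :
    StrictAntiOn
      (fun t : ℝ => (3 - Real.cosh (2 * t)) *
        (Real.sinh (2 * t) + t * Real.cosh (2 * t) - 3 * t) /
        (16 * t * Real.sinh t ^ 2))
      (Set.Ioi 0) := by
  have key : ∀ u : ℝ, u ∈ Set.Ioi (0:ℝ) →
      (3 - Real.cosh (2 * u)) * (Real.sinh (2 * u) + u * Real.cosh (2 * u) - 3 * u) /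
        (16 * u * Real.sinh u ^ 2)
      = (Real.sinh (2*u) - 2*u) / (2*u*Real.sinh u^2) / 4
        - (Real.sinh (2*u) / u) / 8 - Real.sinh u ^ 2 / 4 + 1/2 := by
    intro u hu
    have hu : (0:ℝ) < u := hu
    have hs : 0 < Real.sinh u := by rwa [Real.sinh_pos_iff]
    have h2c : Real.cosh (2*u) = Real.cosh u^2 + Real.sinh u^2 := Real.cosh_two_mul u
    have h2s : Real.sinh (2*u) = 2*Real.sinh u*Real.cosh u := Real.sinh_two_mul u
    have hid : Real.cosh u ^ 2 = Real.sinh u ^ 2 + 1 := Real.cosh_sq u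
    rw [h2c, h2s, hid]
    field_simp
    ring
  intro s hs t ht hst
  have hA := A_anti hs ht hst
  have hB := B_mono hs ht hst
  have hC : Real.sinh s ^ 2 < Real.sinh t ^ 2 := by
    have h1 : Real.sinh s < Real.sinh t := Real.sinh_lt_sinh.2 hst
    have h2 : 0 < Real.sinh s := by rwa [Real.sinh_pos_iff]
    nlinarith
  simp only [key s hs, key t ht]
  simp only at hA hB
  linarith
end

section
/- lim_{x→0⁺} [log(1+x²) - log(x/arsinh(x))] / [log(1+x²) - (1/2)·log(1-x²)] = 5/9, and lim_{x→1⁻} of the same expression equals 0. -/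
open Real Filter Set

lemma aux_log1p : Tendsto (fun y : ℝ => Real.log (1 + y) / y) (nhdsWithin 0 {(0:ℝ)}ᶜ) (nhds 1) := by
  have h := (Real.hasDerivAt_log one_ne_zero)
  rw [hasDerivAt_iff_tendsto_slope] at h
  have hy : Tendsto (fun y : ℝ => 1 + y) (nhdsWithin 0 {(0:ℝ)}ᶜ) (nhdsWithin 1 {(1:ℝ)}ᶜ) := by
    apply tendsto_nhdsWithin_of_tendsto_nhds_of_eventually_within
    · have : Tendsto (fun y : ℝ => 1 + y) (nhds 0) (nhds (1 + 0)) :=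
        tendsto_const_nhds.add tendsto_id
      rw [add_zero] at this
      exact this.mono_left nhdsWithin_le_nhds
    · filter_upwards [self_mem_nhdsWithin] with y hy
      simp only [mem_compl_iff, mem_singleton_iff] at hy ⊢
      intro h; exact hy (by linarith)
  have := h.comp hy
  simp only [inv_one] at this
  refine this.congr fun y => ?_
  simp [slope_def_field, Function.comp]

lemma aux_sqrt1p : Tendsto (fun y : ℝ => (Real.sqrt (1 + y) - 1) / y) (nhdsWithin 0 {(0:ℝ)}ᶜ) (nhds (1/2)) := by
  have h := (Real.hasDerivAt_sqrt one_ne_zero)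
  rw [hasDerivAt_iff_tendsto_slope] at h
  have hy : Tendsto (fun y : ℝ => 1 + y) (nhdsWithin 0 {(0:ℝ)}ᶜ) (nhdsWithin 1 {(1:ℝ)}ᶜ) := by
    apply tendsto_nhdsWithin_of_tendsto_nhds_of_eventually_within
    · have : Tendsto (fun y : ℝ => 1 + y) (nhds 0) (nhds (1 + 0)) :=
        tendsto_const_nhds.add tendsto_id
      rw [add_zero] at this
      exact this.mono_left nhdsWithin_le_nhds
    · filter_upwards [self_mem_nhdsWithin] with y hy
      simp only [mem_compl_iff, mem_singleton_iff] at hy ⊢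
      intro h; exact hy (by linarith)
  have := h.comp hy
  have h2 : (1 / (2 * Real.sqrt 1) : ℝ) = 1/2 := by simp
  rw [h2] at this
  refine this.congr fun y => ?_
  simp [slope_def_field]

lemma aux_sq : Tendsto (fun x : ℝ => x ^ 2) (nhdsWithin 0 (Set.Ioi 0)) (nhdsWithin 0 {(0:ℝ)}ᶜ) := by
  apply tendsto_nhdsWithin_of_tendsto_nhds_of_eventually_within
  · have : Tendsto (fun x : ℝ => x ^ 2) (nhds 0) (nhds (0 ^ 2)) := (continuous_pow 2).tendsto 0
    simpa using this.mono_left nhdsWithin_le_nhds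
  · filter_upwards [self_mem_nhdsWithin] with x hx
    simp only [mem_compl_iff, mem_singleton_iff]
    exact pow_ne_zero 2 (ne_of_gt hx)

-- (1 - 1/√(1+x²))/x² → 1/2 on 𝓝[>]0
lemma aux_fd : Tendsto (fun x : ℝ => (1 - (Real.sqrt (1 + x ^ 2))⁻¹) / x ^ 2)
    (nhdsWithin 0 (Set.Ioi 0)) (nhds (1/2)) := by
  have h1 : Tendsto (fun x : ℝ => (Real.sqrt (1 + x ^ 2) - 1) / x ^ 2)
      (nhdsWithin 0 (Set.Ioi 0)) (nhds (1/2)) := aux_sqrt1p.comp aux_sq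
  have h2 : Tendsto (fun x : ℝ => (Real.sqrt (1 + x ^ 2))⁻¹)
      (nhdsWithin 0 (Set.Ioi 0)) (nhds 1) := by
    have hc : Continuous (fun x : ℝ => (Real.sqrt (1 + x ^ 2))⁻¹) := by
      apply Continuous.inv₀ (by fun_prop)
      intro x
      have : (0:ℝ) < 1 + x ^ 2 := by positivity
      positivity
    have := hc.tendsto 0
    simpa using this.mono_left nhdsWithin_le_nhds
  have := h1.mul h2
  rw [mul_one] at this
  refine this.congr' ?_
  filter_upwards [self_mem_nhdsWithin] with x hx
  have hs : (0:ℝ) < Real.sqrt (1 + x ^ 2) := Real.sqrt_pos.2 (by positivity)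
  field_simp

lemma aux_cube : Tendsto (fun x : ℝ => (x - Real.arsinh x) / x ^ 3)
    (nhdsWithin 0 (Set.Ioi 0)) (nhds (1/6)) := by
  apply HasDerivAt.lhopital_zero_nhdsGT
    (f' := fun x => 1 - (Real.sqrt (1 + x ^ 2))⁻¹) (g' := fun x => 3 * x ^ 2)
  · filter_upwards with x
    exact (hasDerivAt_id x).sub (Real.hasDerivAt_arsinh x)
  · filter_upwards with x
    simpa using hasDerivAt_pow 3 x
  · filter_upwards [self_mem_nhdsWithin] with x hx
    have : (0:ℝ) < x := hx
    positivity
  · have : Continuous (fun x : ℝ => x - Real.arsinh x) :=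
      continuous_id.sub Real.continuous_arsinh
    have h := this.tendsto 0
    simp only [Real.arsinh_zero, sub_zero] at h
    exact h.mono_left nhdsWithin_le_nhds
  · have h := (continuous_pow 3).tendsto (0:ℝ)
    simpa using h.mono_left nhdsWithin_le_nhds
  · have := aux_fd.mul (tendsto_const_nhds (x := (1/3 : ℝ)))
    rw [show (1/2 : ℝ) * (1/3) = 1/6 by norm_num] at this
    refine this.congr' ?_
    filter_upwards [self_mem_nhdsWithin] with x hx
    ring

lemma aux_ratio : Tendsto (fun x : ℝ => x / Real.arsinh x) (nhdsWithin 0 (Set.Ioi 0)) (nhds 1) := by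
  have h := Real.hasDerivAt_arsinh 0
  rw [hasDerivAt_iff_tendsto_slope] at h
  have h' : Tendsto (fun x : ℝ => Real.arsinh x / x) (nhdsWithin 0 {(0:ℝ)}ᶜ) (nhds 1) := by
    have he : (Real.sqrt (1 + 0 ^ 2))⁻¹ = (1:ℝ) := by norm_num
    rw [he] at h
    refine h.congr fun x => ?_
    simp [slope_def_field, Real.arsinh_zero]
  have h2 := (h'.mono_left (nhdsWithin_mono _ (fun x hx => ne_of_gt hx))).inv₀ one_ne_zero
  simp only [inv_one] at h2
  refine h2.congr fun x => ?_
  simp [inv_div]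

noncomputable def r (x : ℝ) : ℝ :=
  (Real.log (1 + x ^ 2) - Real.log (x / Real.arsinh x)) /
    (Real.log (1 + x ^ 2) - (1 / 2) * Real.log (1 - x ^ 2))

lemma aux_A : Tendsto (fun x : ℝ => Real.log (1 + x ^ 2) / x ^ 2)
    (nhdsWithin 0 (Set.Ioi 0)) (nhds 1) := aux_log1p.comp aux_sq

lemma aux_C : Tendsto (fun x : ℝ => Real.log (1 - x ^ 2) / x ^ 2)
    (nhdsWithin 0 (Set.Ioi 0)) (nhds (-1)) := by
  have hneg : Tendsto (fun x : ℝ => -(x ^ 2)) (nhdsWithin 0 (Set.Ioi 0)) (nhdsWithin 0 {(0:ℝ)}ᶜ) := by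
    apply tendsto_nhdsWithin_of_tendsto_nhds_of_eventually_within
    · have : Tendsto (fun x : ℝ => -(x ^ 2)) (nhds 0) (nhds (-(0 ^ 2))) :=
        ((continuous_pow 2).neg.tendsto 0)
      simpa [show (1:ℝ)+1 = 2 by norm_num] using this.mono_left nhdsWithin_le_nhds
    · filter_upwards [self_mem_nhdsWithin] with x hx
      simp only [mem_compl_iff, mem_singleton_iff, neg_eq_zero]
      exact pow_ne_zero 2 (ne_of_gt hx)
  have h := aux_log1p.comp hneg
  have h2 := h.neg
  rw [show -(1:ℝ) = -1 by ring] at h2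
  refine h2.congr fun x => ?_
  simp only [Function.comp]
  rw [show (1 : ℝ) + -(x^2) = 1 - x^2 by ring]
  rw [div_neg, neg_neg]

lemma aux_small : ∀ᶠ x : ℝ in nhdsWithin 0 (Set.Ioi 0),
    0 < x ∧ 0 < Real.arsinh x ∧ Real.arsinh x < x := by
  filter_upwards [self_mem_nhdsWithin] with x hx
  have hx0 : (0:ℝ) < x := hx
  refine ⟨hx0, Real.arsinh_pos_iff.2 hx0, ?_⟩
  have h1 : x < Real.sinh x := Real.self_lt_sinh_iff.2 hx0
  have := Real.arsinh_lt_arsinh.2 h1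
  rwa [Real.arsinh_sinh] at this

lemma aux_B : Tendsto (fun x : ℝ => Real.log (x / Real.arsinh x) / x ^ 2)
    (nhdsWithin 0 (Set.Ioi 0)) (nhds (1/6)) := by
  set u : ℝ → ℝ := fun x => x / Real.arsinh x - 1 with hu
  have hupos : ∀ᶠ x : ℝ in nhdsWithin 0 (Set.Ioi 0), 0 < u x := by
    filter_upwards [aux_small] with x ⟨hx, ha, hlt⟩
    have : 1 < x / Real.arsinh x := (one_lt_div ha).2 hlt
    simp [hu]; linarith
  have hu0 : Tendsto u (nhdsWithin 0 (Set.Ioi 0)) (nhdsWithin 0 {(0:ℝ)}ᶜ) := by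
    apply tendsto_nhdsWithin_of_tendsto_nhds_of_eventually_within
    · have := aux_ratio.sub (tendsto_const_nhds (x := (1:ℝ)))
      rw [sub_self] at this
      exact this
    · filter_upwards [hupos] with x hx
      simp only [mem_compl_iff, mem_singleton_iff]
      exact ne_of_gt hx
  have h1 : Tendsto (fun x => Real.log (1 + u x) / u x) (nhdsWithin 0 (Set.Ioi 0)) (nhds 1) :=
    aux_log1p.comp hu0
  have h2 : Tendsto (fun x => u x / x ^ 2) (nhdsWithin 0 (Set.Ioi 0)) (nhds (1/6)) := by
    have := aux_cube.mul aux_ratio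
    rw [mul_one] at this
    refine this.congr' ?_
    filter_upwards [aux_small] with x ⟨hx, ha, _⟩
    have hx0 : x ≠ 0 := ne_of_gt hx
    have ha0 : Real.arsinh x ≠ 0 := ne_of_gt ha
    simp only [hu]
    field_simp
  have := h1.mul h2
  rw [one_mul] at this
  refine this.congr' ?_
  filter_upwards [hupos] with x hx
  have hne : u x ≠ 0 := ne_of_gt hx
  rw [div_mul_div_comm, mul_comm (u x), mul_div_mul_right _ _ hne]
  congr 2
  simp [hu]

theorem stmt18 :
    Filter.Tendsto r (nhdsWithin 0 (Set.Ioi 0)) (nhds (5 / 9)) ∧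
    Filter.Tendsto r (nhdsWithin 1 (Set.Iio 1)) (nhds 0) := by
  constructor
  · have hnum : Tendsto (fun x : ℝ =>
        (Real.log (1 + x ^ 2) - Real.log (x / Real.arsinh x)) / x ^ 2)
        (nhdsWithin 0 (Set.Ioi 0)) (nhds (1 - 1/6)) := by
      have := aux_A.sub aux_B
      refine this.congr fun x => ?_
      rw [sub_div]
    have hden : Tendsto (fun x : ℝ =>
        (Real.log (1 + x ^ 2) - (1/2) * Real.log (1 - x ^ 2)) / x ^ 2)
        (nhdsWithin 0 (Set.Ioi 0)) (nhds (1 - (1/2) * (-1))) := by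
      have := aux_A.sub ((aux_C.const_mul (1/2 : ℝ)))
      refine this.congr fun x => ?_
      rw [sub_div, mul_div_assoc]
    have h := hnum.div hden (by norm_num)
    rw [show ((1 - 1/6) / (1 - (1/2) * (-1)) : ℝ) = 5/9 by norm_num] at h
    refine h.congr' ?_
    filter_upwards [self_mem_nhdsWithin] with x hx
    have hx2 : (x ^ 2 : ℝ) ≠ 0 := pow_ne_zero 2 (ne_of_gt hx)
    show _ / _ = r x
    simp only [Pi.div_apply]
    unfold r
    have key : ∀ (a b c : ℝ), c ≠ 0 → a / c / (b / c) = a / b := by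
      intro a b c hc
      rcases eq_or_ne b 0 with rfl | hb
      · simp
      · field_simp
    exact key _ _ _ hx2
  · have harsinh1 : Real.arsinh 1 ≠ 0 := ne_of_gt (Real.arsinh_pos_iff.2 one_pos)
    have hnum : Tendsto (fun x : ℝ =>
        Real.log (1 + x ^ 2) - Real.log (x / Real.arsinh x))
        (nhdsWithin 1 (Set.Iio 1))
        (nhds (Real.log 2 - Real.log (1 / Real.arsinh 1))) := by
      have hc : ContinuousAt (fun x : ℝ =>
          Real.log (1 + x ^ 2) - Real.log (x / Real.arsinh x)) 1 := by
        apply ContinuousAt.sub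
        · exact (Real.continuousAt_log (by norm_num)).comp (by fun_prop)
        · apply ContinuousAt.log
          · exact ContinuousAt.div continuousAt_id Real.continuous_arsinh.continuousAt harsinh1
          · exact div_ne_zero one_ne_zero harsinh1
      have := hc.tendsto.mono_left (nhdsWithin_le_nhds (s := Set.Iio 1))
      simpa [show (1:ℝ)+1 = 2 by norm_num] using this
    have hden : Tendsto (fun x : ℝ =>
        Real.log (1 + x ^ 2) - (1/2) * Real.log (1 - x ^ 2))
        (nhdsWithin 1 (Set.Iio 1)) atTop := by
      have hlog : Tendsto (fun x : ℝ => Real.log (1 - x ^ 2)) (nhdsWithin 1 (Set.Iio 1)) atBot := by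
        apply Real.tendsto_log_nhdsGT_zero.comp
        apply tendsto_nhdsWithin_of_tendsto_nhds_of_eventually_within
        · have : Tendsto (fun x : ℝ => 1 - x ^ 2) (nhds 1) (nhds (1 - 1 ^ 2)) :=
            (tendsto_const_nhds.sub ((continuous_pow 2).tendsto 1))
          simpa [show (1:ℝ)+1 = 2 by norm_num] using this.mono_left nhdsWithin_le_nhds
        · have hmem : Set.Ioo (0:ℝ) 1 ∈ nhdsWithin 1 (Set.Iio 1) :=
            Ioo_mem_nhdsLT_of_mem (by norm_num)
          filter_upwards [hmem] with x ⟨hx0, hx1⟩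
          have : x ^ 2 < 1 := by nlinarith
          simp only [Set.mem_Ioi]
          linarith
        
      have h2 : Tendsto (fun x : ℝ => -(1/2) * Real.log (1 - x ^ 2))
          (nhdsWithin 1 (Set.Iio 1)) atTop := hlog.const_mul_atBot_of_neg (by norm_num)
      have h3 : Tendsto (fun x : ℝ => Real.log (1 + x ^ 2)) (nhdsWithin 1 (Set.Iio 1))
          (nhds (Real.log 2)) := by
        have hc : ContinuousAt (fun x : ℝ => Real.log (1 + x ^ 2)) 1 :=
          (Real.continuousAt_log (by norm_num)).comp (by fun_prop)
        have := hc.tendsto.mono_left (nhdsWithin_le_nhds (s := Set.Iio 1))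
        simpa [show (1:ℝ)+1 = 2 by norm_num] using this
      have h4 := h3.add_atTop h2
      refine h4.congr fun x => ?_
      ring
    have := hnum.div_atTop hden
    exact this
end
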